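/- For every n ≥ 2, f_0(n-1) > f_0(n) - 1/√2. -/

import Mathlib

open Real Matrix

/-- `simplexInCube n ℓ` : an isometric copy of the regular n-simplex of edge length ℓ
with barycenter at the origin is contained in the cube [-1/2, 1/2]ⁿ. -/
def simplexInCube (n : ℕ) (ℓ : ℝ) : Prop :=
  ∃ p : Fin (n + 1) → EuclideanSpace ℝ (Fin n),
    (∀ i j, i ≠ j → dist (p i) (p j) = ℓ) ∧ (∑ i, p i = 0) ∧
    ∀ i k, |p i k| ≤ 1 / 2

/-- `f0 n` : the largest edge length of a regular n-simplex with barycenter at the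
origin contained in the unit cube. -/
noncomputable def f0 (n : ℕ) : ℝ := sSup {ℓ : ℝ | simplexInCube n ℓ}

noncomputable def cbound (k : ℕ) : ℝ :=
  ((k : ℝ) + 2) / (Real.sqrt 2 * Real.sqrt ((k : ℝ) + 1) * (Real.sqrt ((k : ℝ) + 1) + 1))

lemma alg_h1 (W ν σ wm dm : ℝ) (hW : 0 < W) (hνW : 0 < W + ν) (hσw : σ*wm = ν) :
    dm - wm * (σ*W*dm/(W*(W+ν))) = W*dm/(W+ν) := by
  have h1 : W ≠ 0 := ne_of_gt hW
  have h2 : W + ν ≠ 0 := ne_of_gt hνW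
  field_simp
  linear_combination (-dm) * hσw

lemma alg_h2 (W ν σ dm : ℝ) (hW : W ≠ 0) (hνW : W + ν ≠ 0) (hσ2 : σ^2 = 1) :
    (σ*W*dm/(W*(W+ν)))^2 * W^2 = (W*dm/(W+ν))^2 := by
  field_simp
  linear_combination (dm^2) * hσ2

lemma alg_bary (W ν σ wm η K wj : ℝ) (hW : 0 < W) (hνW : 0 < W + ν)
    (hσw : σ*wm = ν) (hW2 : W^2 = (K+1)*η) :
    -wj - (wj/(W*(W+ν))) * ((K+1)*(-η) + σ*W*(-wm)) = 0 := by
  have h1 : W ≠ 0 := ne_of_gt hW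
  have h2 : W + ν ≠ 0 := ne_of_gt hνW
  field_simp
  linear_combination (wj*W) * hσw - wj * hW2

lemma alg_t (den N g : ℝ) (hden : 0 < den) (hN : 0 ≤ N) (hg : |g| ≤ 1/2 + N/den) :
    |(den/(den+2*N)) * g| ≤ 1/2 := by
  have h1 : 0 < den + 2*N := by linarith
  rw [abs_mul, abs_of_pos (div_pos hden h1)]
  have h2 : den/(den+2*N) * (1/2 + N/den) = 1/2 := by field_simp
  calc den/(den+2*N)*|g| ≤ den/(den+2*N)*(1/2+N/den) :=
        mul_le_mul_of_nonneg_left hg (le_of_lt (div_pos hden h1))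
    _ = 1/2 := h2

lemma cbound_pos (k : ℕ) : 0 < cbound k := by
  have h1 : (0:ℝ) < Real.sqrt 2 := by positivity
  have h2 : (0:ℝ) < Real.sqrt ((k : ℝ) + 1) := Real.sqrt_pos.2 (by positivity)
  unfold cbound
  positivity


lemma cbound_lt (k : ℕ) (hk : 1 ≤ k) : cbound k < 1 / Real.sqrt 2 := by
  have hx0 : (0:ℝ) < Real.sqrt ((k : ℝ) + 1) := Real.sqrt_pos.2 (by positivity)
  have hx2 : (Real.sqrt ((k : ℝ) + 1))^2 = (k : ℝ) + 1 := Real.sq_sqrt (by positivity)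
  have hk1 : (1:ℝ) ≤ (k : ℝ) := by exact_mod_cast hk
  have hx1 : 1 < Real.sqrt ((k : ℝ) + 1) := by nlinarith
  have hS : (0:ℝ) < Real.sqrt 2 := by positivity
  unfold cbound
  rw [div_lt_div_iff₀ (by positivity) hS]
  nlinarith [mul_pos hS (sub_pos.2 hx1)]

set_option maxHeartbeats 1600000 in
lemma arith_final (k : ℕ) (L η W ν : ℝ) (hL : 0 < L) (hη : 0 < η)
    (hη2 : 2*((k:ℝ)+2)*η = L^2) (hW2 : W^2 = ((k:ℝ)+1)*η) (hW : 0 < W)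
    (hW4 : W^2 ≤ ((k:ℝ)+1)/4) (hν0 : 0 ≤ ν) (hν : ν ≤ 1/2) :
    L ≤ (W*(W+ν)/(W*(W+ν) + 2*(ν*(η+W/2)))) * L + cbound k := by
  set x : ℝ := Real.sqrt ((k:ℝ)+1) with hxdef
  set z : ℝ := Real.sqrt ((k:ℝ)+2) with hzdef
  set S : ℝ := Real.sqrt 2 with hSdef
  have hx2 : x^2 = (k:ℝ)+1 := Real.sq_sqrt (by positivity)
  have hz2 : z^2 = (k:ℝ)+2 := Real.sq_sqrt (by positivity)
  have hS2 : S^2 = 2 := Real.sq_sqrt (by norm_num)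
  have hx0 : 0 < x := Real.sqrt_pos.2 (by positivity)
  have hz0 : 0 < z := Real.sqrt_pos.2 (by positivity)
  have hS0 : 0 < S := Real.sqrt_pos.2 (by norm_num)
  have hx1 : 1 ≤ x := by nlinarith [Nat.cast_nonneg (α := ℝ) k]
  have hxz : x < z := by nlinarith
  have hzx2 : z^2 = x^2 + 1 := by rw [hz2, hx2]; ring
  have hWx : 2*W ≤ x := by nlinarith
  have hLx : x*L = S*(z*W) := by
    have hnn1 : 0 ≤ x*L := by positivity
    have hnn2 : 0 ≤ S*(z*W) := by positivity
    have hsq : (x*L)^2 = (S*(z*W))^2 := by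
      calc (x*L)^2 = x^2*L^2 := by ring
        _ = ((k:ℝ)+1)*L^2 := by rw [hx2]
        _ = ((k:ℝ)+1)*(2*((k:ℝ)+2)*η) := by rw [hη2]
        _ = 2*((k:ℝ)+2)*(((k:ℝ)+1)*η) := by ring
        _ = 2*((k:ℝ)+2)*W^2 := by rw [hW2]
        _ = S^2*z^2*W^2 := by rw [hS2, hz2]
        _ = (S*(z*W))^2 := by ring
    have := Real.sqrt_sq hnn1
    rw [← Real.sqrt_sq hnn1, ← Real.sqrt_sq hnn2, hsq]
  have hcb : cbound k = ((k:ℝ)+2)/(S*x*(x+1)) := rfl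
  have hA : (0:ℝ) ≤ (x - 2*W)*W*(x+1) := by
    apply mul_nonneg (mul_nonneg (by linarith) hW.le) (by linarith)
  have hB : (0:ℝ) ≤ (z - x)*(x+1)^2*W := by
    apply mul_nonneg (mul_nonneg (by linarith) (sq_nonneg _)) hW.le
  have hC : (0:ℝ) ≤ (x - 2*W)*x*z := by
    apply mul_nonneg (mul_nonneg (by linarith) hx0.le) hz0.le
  have hD : z*W*z^2 = z*W*x^2 + z*W := by linear_combination (z*W)*hzx2
  have P : (x+1)*W*(2*W+x^2) ≤ z*(W*z^2 + x^2) := by nlinarith [hA, hB, hC, hD]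
  have hLdiv : L = S*z*W/x := by
    rw [eq_div_iff (ne_of_gt hx0)]
    linear_combination hLx
  have hηdiv : η = W^2/x^2 := by
    rw [eq_div_iff (by positivity : (x:ℝ)^2 ≠ 0)]
    linear_combination η*hx2 - hW2
  have e1 : (L*(η + W/2)) * (S*x^3*(x+1)) = z*W^2*(x+1)*(2*W+x^2) := by
    have e1' : (L*(η + W/2)) * (S*x^3*(x+1)) = S^2*(z*W*(x+1)*(W^2 + x^2*(W/2))) := by
      rw [hLdiv, hηdiv]
      field_simp
    rw [e1', hS2]
    ring
  have e2 : (cbound k)*(W^2 + W + η)*(S*x^3*(x+1)) = z^2*W*(W*z^2+x^2) := by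
    rw [hcb, hηdiv, hz2, show ((k:ℝ)+2) = x^2+1 by rw [hx2]; ring]
    field_simp
    ring
  have key2 : z*W^2*(x+1)*(2*W+x^2) ≤ z^2*W*(W*z^2+x^2) := by
    nlinarith [mul_le_mul_of_nonneg_left P (show (0:ℝ) ≤ z*W by positivity)]
  have Hhalf : L*(η+W/2) ≤ (cbound k)*(W^2+W+η) := by
    have hpos : 0 < S*x^3*(x+1) := by positivity
    have h5 : (L*(η+W/2))*(S*x^3*(x+1)) ≤ ((cbound k)*(W^2+W+η))*(S*x^3*(x+1)) := by
      rw [e1, e2]; exact key2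
    exact le_of_mul_le_mul_right h5 hpos
  have hcb0 : 0 ≤ cbound k := le_of_lt (cbound_pos k)
  have G0 : L*(2*(ν*(η+W/2))) ≤ (cbound k)*(W*(W+ν) + 2*(ν*(η+W/2))) := by
    nlinarith [mul_le_mul_of_nonneg_left Hhalf (show (0:ℝ) ≤ 2*ν by linarith),
      mul_nonneg hcb0 (mul_nonneg (show (0:ℝ) ≤ 1 - 2*ν by linarith) (sq_nonneg W))]
  have hden : 0 < W*(W+ν) := mul_pos hW (by linarith)
  have hN0 : 0 ≤ ν*(η+W/2) := mul_nonneg hν0 (by linarith)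
  have hdN : 0 < W*(W+ν) + 2*(ν*(η+W/2)) := by linarith
  have hq : L - (W*(W+ν)/(W*(W+ν) + 2*(ν*(η+W/2))))*L
      = L*(2*(ν*(η+W/2)))/(W*(W+ν) + 2*(ν*(η+W/2))) := by
    field_simp
    ring
  have hq2 : L*(2*(ν*(η+W/2)))/(W*(W+ν) + 2*(ν*(η+W/2))) ≤ cbound k :=
    (div_le_iff₀ hdN).2 (by linarith [G0])
  linarith

lemma simplex_zero (n : ℕ) : simplexInCube n 0 := by
  refine ⟨fun _ => (0 : EuclideanSpace ℝ (Fin n)), fun i j _ => by simp, by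
    apply Finset.sum_const_zero, fun i b => by norm_num⟩

lemma simplex_le (n : ℕ) (hn : 1 ≤ n) (ℓ : ℝ) (h : simplexInCube n ℓ) : ℓ ≤ (n : ℝ) := by
  obtain ⟨p, hd, -, hb⟩ := h
  obtain ⟨n', rfl⟩ : ∃ n', n = n' + 1 := ⟨n - 1, by omega⟩
  have h01 : (0 : Fin (n' + 2)) ≠ 1 := by
    intro e
    have := congrArg Fin.val e
    simp [Fin.val_one] at this
  have hL := hd 0 1 h01
  have hnn : 0 ≤ ℓ := hL ▸ dist_nonneg
  have hsq : ℓ^2 ≤ ((n' : ℝ) + 1) := by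
    have hnn2 : 0 ≤ ∑ b, dist (p 0 b) (p 1 b) ^ 2 :=
      Finset.sum_nonneg fun b _ => sq_nonneg _
    have : ℓ^2 = ∑ b, dist (p 0 b) (p 1 b) ^ 2 := by
      rw [← hL, EuclideanSpace.dist_eq, Real.sq_sqrt hnn2]
    rw [this]
    calc ∑ b, dist (p 0 b) (p 1 b) ^ 2 ≤ ∑ _b : Fin (n' + 1), (1:ℝ) := by
          refine Finset.sum_le_sum fun b _ => ?_
          have h1 := hb 0 b
          have h2 := hb 1 b
          rw [Real.dist_eq, sq_abs]
          nlinarith [abs_le.1 h1, abs_le.1 h2]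
      _ = ((n' : ℝ) + 1) := by simp
  have : (1:ℝ) ≤ (n' : ℝ) + 1 := by
    have : (0:ℝ) ≤ (n' : ℝ) := Nat.cast_nonneg n'
    linarith
  push_cast
  nlinarith

set_option maxHeartbeats 1000000 in
lemma key (k : ℕ) (L : ℝ) (h : simplexInCube (k + 1) L) :
    ∃ ℓ, simplexInCube k ℓ ∧ L ≤ ℓ + cbound k := by
  rcases le_or_gt L 0 with hL0 | hL0
  · exact ⟨0, simplex_zero k, by linarith [cbound_pos k]⟩
  obtain ⟨p, hdist, hsum, hbox⟩ := h
  set K : ℝ := (k : ℝ) with hKdef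
  have hK0 : (0:ℝ) ≤ K := Nat.cast_nonneg k
  have hK2 : (0:ℝ) < K + 2 := by linarith
  -- barycenter coordinates
  have hcol : ∀ b, ∑ i, p i b = 0 := by
    intro b
    have h1 : (∑ i, p i) b = (0 : EuclideanSpace ℝ (Fin (k+1))) b := by rw [hsum]
    rw [WithLp.ofLp_sum, Finset.sum_apply b Finset.univ fun i => (p i).ofLp] at h1
    simpa using h1
  -- squared distances
  have C0 : ∀ i j, i ≠ j → ∑ b, (p i b - p j b)^2 = L^2 := by
    intro i j hij
    have h1 := hdist i j hij
    rw [EuclideanSpace.dist_eq] at h1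
    have hnn : 0 ≤ ∑ b, dist (p i b) (p j b)^2 :=
      Finset.sum_nonneg fun b _ => sq_nonneg _
    have h2 : ∑ b, dist (p i b) (p j b)^2 = L^2 := by rw [← h1, Real.sq_sqrt hnn]
    rw [← h2]
    exact Finset.sum_congr rfl fun b _ => by rw [Real.dist_eq, sq_abs]
  have C1 : ∀ i j, i ≠ j → ∑ b, p i b * p j b
      = ((∑ b, (p i b)^2) + (∑ b, (p j b)^2) - L^2)/2 := by
    intro i j hij
    have h0 := C0 i j hij
    have hexp : ∑ b, (p i b - p j b)^2
        = (∑ b, (p i b)^2) + (∑ b, (p j b)^2) - 2 * ∑ b, p i b * p j b := by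
      rw [Finset.mul_sum, ← Finset.sum_add_distrib, ← Finset.sum_sub_distrib]
      exact Finset.sum_congr rfl fun b _ => by ring
    linarith [hexp.symm.trans h0]
  set η : ℝ := L^2/(2*(K+2)) with hηdef
  have hηpos : 0 < η := by
    rw [hηdef]; exact div_pos (by positivity) (by linarith)
  have hη2 : 2*(K+2)*η = L^2 := by rw [hηdef]; field_simp
  set T : ℝ := ∑ j, ∑ b, (p j b)^2 with hTdef
  have hA : ∀ i : Fin (k+2), (K+2) * (∑ b, (p i b)^2) = (K+1)*L^2 - T := by
    intro i
    have hz : ∑ j, ∑ b, p i b * p j b = 0 := by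
      rw [Finset.sum_comm]
      calc ∑ b, ∑ j, p i b * p j b = ∑ b, p i b * ∑ j, p j b := by
            exact Finset.sum_congr rfl fun b _ => (Finset.mul_sum _ _ _).symm
        _ = 0 := by
            refine Finset.sum_eq_zero fun b _ => ?_
            rw [hcol b, mul_zero]
    have hsplit : ∑ j, ∑ b, p i b * p j b
        = (∑ b, p i b * p i b) + ∑ j ∈ Finset.univ.erase i, ∑ b, p i b * p j b :=
      (Finset.add_sum_erase _ _ (Finset.mem_univ i)).symm
    have herase : ∑ j ∈ Finset.univ.erase i, ∑ b, p i b * p j b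
        = ∑ j ∈ Finset.univ.erase i, (((∑ b, (p i b)^2) + (∑ b, (p j b)^2) - L^2)/2) := by
      refine Finset.sum_congr rfl fun j hj => ?_
      exact C1 i j (Ne.symm (Finset.mem_erase.1 hj).1)
    have hcard : (Finset.univ.erase i).card = k + 1 := by
      rw [Finset.card_erase_of_mem (Finset.mem_univ i)]
      simp
    have herase2 : ∑ j ∈ Finset.univ.erase i, ((∑ b, (p j b)^2)) = T - ∑ b, (p i b)^2 := by
      rw [hTdef]
      exact Finset.sum_erase_eq_sub (Finset.mem_univ i)
    have hii : ∑ b, p i b * p i b = ∑ b, (p i b)^2 :=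
      Finset.sum_congr rfl fun b _ => by ring
    have hsum_er : ∑ j ∈ Finset.univ.erase i, (((∑ b, (p i b)^2) + (∑ b, (p j b)^2) - L^2)/2)
        = ((K+1) * ((∑ b, (p i b)^2) - L^2) + (T - ∑ b, (p i b)^2))/2 := by
      rw [← Finset.sum_div]
      congr 1
      rw [Finset.sum_congr rfl (fun j _ =>
        show (∑ b, (p i b)^2) + (∑ b, (p j b)^2) - L^2
           = ((∑ b, (p i b)^2) - L^2) + (∑ b, (p j b)^2) from by ring)]
      rw [Finset.sum_add_distrib, Finset.sum_const, herase2, hcard, nsmul_eq_mul]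
      push_cast
      ring
    have hfin := hz
    rw [hsplit, herase, hsum_er, hii] at hfin
    -- hfin : A i + ((K+1)(A i − L²) + (T − A i))/2 = 0
    linarith [hfin]
  have hT : T = (K+1)*L^2/2 := by
    have h1 : ∑ i : Fin (k+2), ((K+2) * (∑ b, (p i b)^2)) = ∑ _i : Fin (k+2), ((K+1)*L^2 - T) :=
      Finset.sum_congr rfl fun i _ => hA i
    rw [← Finset.mul_sum, ← hTdef, Finset.sum_const] at h1
    simp only [Finset.card_univ, Fintype.card_fin, nsmul_eq_mul] at h1
    push_cast at h1
    -- (K+2)*T = (k+2)*((K+1)L² − T)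
    have hKcast : ((k:ℝ) + 2) = K + 2 := by rw [hKdef]
    rw [hKcast] at h1
    nlinarith [h1, hK2]
  have C2 : ∀ i : Fin (k+2), ∑ b, (p i b)^2 = (K+1)*η := by
    intro i
    have h1 := hA i
    have h3 : (K+2)*(∑ b, (p i b)^2) = (K+2)*((K+1)*η) := by
      rw [h1, hT]
      linear_combination (-(K+1)/2) * hη2
    exact mul_left_cancel₀ (ne_of_gt hK2) h3
  have C3 : ∀ i j, i ≠ j → ∑ b, p i b * p j b = -η := by
    intro i j hij
    rw [C1 i j hij, C2 i, C2 j]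
    linear_combination (1/2) * hη2
  -- the deleted row
  obtain ⟨w, hwdef⟩ : ∃ w : Fin (k+1) → ℝ, ∀ b, w b = p (Fin.last (k+1)) b :=
    ⟨fun b => p (Fin.last (k+1)) b, fun _ => rfl⟩
  set W : ℝ := Real.sqrt ((K+1)*η) with hWdef
  have hW2 : W^2 = (K+1)*η := Real.sq_sqrt (le_of_lt (mul_pos (by linarith) hηpos))
  have hWpos : 0 < W := Real.sqrt_pos.2 (mul_pos (by linarith) hηpos)
  have hw2 : ∑ b, (w b)^2 = W^2 := by
    rw [hW2, ← C2 (Fin.last (k+1))]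
    exact Finset.sum_congr rfl fun b _ => by rw [hwdef]
  have hwbox : ∀ b, |w b| ≤ 1/2 := fun b => by rw [hwdef]; exact hbox _ b
  have hW4 : W^2 ≤ (K+1)/4 := by
    rw [← hw2]
    calc ∑ b, (w b)^2 ≤ ∑ _b : Fin (k+1), (1/4 : ℝ) := by
          refine Finset.sum_le_sum fun b _ => ?_
          have h1 := abs_le.1 (hwbox b)
          nlinarith [h1.1, h1.2]
      _ = (K+1)/4 := by
          rw [Finset.sum_const, Finset.card_univ, Fintype.card_fin, nsmul_eq_mul]
          push_cast
          rw [hKdef]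
          ring
  obtain ⟨m, -, hm⟩ := Finset.exists_max_image Finset.univ (fun b => |w b|)
    Finset.univ_nonempty
  set ν : ℝ := |w m| with hνdef
  have hmax : ∀ b, |w b| ≤ ν := fun b => hm b (Finset.mem_univ b)
  have hν0 : 0 ≤ ν := abs_nonneg _
  have hνhalf : ν ≤ 1/2 := hwbox m
  set σ : ℝ := if 0 ≤ w m then 1 else -1 with hσdef
  have hσw : σ * w m = ν := by
    rw [hσdef, hνdef]
    by_cases h : 0 ≤ w m
    · rw [if_pos h, abs_of_nonneg h]; ring
    · rw [if_neg h, abs_of_neg (lt_of_not_ge h)]; ring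
  have hσ2 : σ^2 = 1 := by
    rw [hσdef]; by_cases h : 0 ≤ w m <;> simp [h]
  have hσabs : |σ| = 1 := by
    rw [hσdef]; by_cases h : 0 ≤ w m <;> simp [h]
  set den : ℝ := W*(W+ν) with hdendef
  have hden : 0 < den := by rw [hdendef]; exact mul_pos hWpos (by linarith)
  set N : ℝ := ν*(η + W/2) with hNdef
  have hN0 : 0 ≤ N := by rw [hNdef]; exact mul_nonneg hν0 (by linarith)
  have hdenN : 0 < den + 2*N := by linarith
  set t : ℝ := den/(den + 2*N) with htdef
  have ht_pos : 0 < t := div_pos hden hdenN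
  obtain ⟨G, hGdef⟩ : ∃ G : Fin (k+1) → Fin k → ℝ, ∀ a j, G a j
      = p a.castSucc (m.succAbove j) - (w (m.succAbove j)/den) * (-η + σ*W*(p a.castSucc m)) :=
    ⟨fun a j => p a.castSucc (m.succAbove j)
      - (w (m.succAbove j)/den) * (-η + σ*W*(p a.castSucc m)), fun _ _ => rfl⟩
  obtain ⟨p', hp'app⟩ : ∃ p' : Fin (k+1) → EuclideanSpace ℝ (Fin k), ∀ a j, p' a j = t * G a j :=
    ⟨fun a => WithLp.toLp 2 (fun j => t * G a j : Fin k → ℝ), fun _ _ => rfl⟩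
  have hlast_ne : ∀ a : Fin (k+1), a.castSucc ≠ Fin.last (k+1) :=
    fun a => (Fin.castSucc_lt_last a).ne
  have hwp : ∀ a : Fin (k+1), ∑ b, w b * p a.castSucc b = -η := by
    intro a
    have h := C3 (Fin.last (k+1)) a.castSucc (Ne.symm (hlast_ne a))
    rw [← h]
    exact Finset.sum_congr rfl fun b _ => by rw [hwdef]
  -- distances of the new configuration
  have hdist' : ∀ a a' : Fin (k+1), a ≠ a' → dist (p' a) (p' a') = t * L := by
    intro a a' haa
    have hne : a.castSucc ≠ a'.castSucc := fun e => haa (Fin.castSucc_injective _ e)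
    obtain ⟨d, hddef⟩ : ∃ d : Fin (k+1) → ℝ, ∀ b, d b = p a.castSucc b - p a'.castSucc b :=
      ⟨fun b => p a.castSucc b - p a'.castSucc b, fun _ => rfl⟩
    have hd2 : ∑ b, (d b)^2 = L^2 := by
      rw [← C0 _ _ hne]
      exact Finset.sum_congr rfl fun b _ => by rw [hddef]
    have hwd : ∑ b, w b * d b = 0 := by
      have hsplit : ∑ b, w b * d b
          = (∑ b, w b * p a.castSucc b) - ∑ b, w b * p a'.castSucc b := by
        rw [← Finset.sum_sub_distrib]
        exact Finset.sum_congr rfl fun b _ => by rw [hddef]; ring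
      rw [hsplit, hwp a, hwp a']; ring
    set c2 : ℝ := σ*W*(d m)/den with hc2def
    have hrw : ∀ j, G a j - G a' j = d (m.succAbove j) - w (m.succAbove j) * c2 := by
      intro j
      rw [hGdef, hGdef, hc2def, hddef (m.succAbove j), hddef m]
      ring
    have hfull : ∑ b, (d b - w b * c2)^2 = L^2 + c2^2 * W^2 := by
      have expand : ∀ b, (d b - w b * c2)^2
          = (d b)^2 - (2*c2) * (w b * d b) + c2^2 * (w b)^2 := fun b => by ring
      rw [Finset.sum_congr rfl fun b _ => expand b, Finset.sum_add_distrib,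
        Finset.sum_sub_distrib, ← Finset.mul_sum, ← Finset.mul_sum, hd2, hwd, hw2]
      ring
    have h1 : d m - w m * c2 = W*(d m)/(W+ν) := by
      rw [hc2def, hdendef]
      exact alg_h1 W ν σ (w m) (d m) hWpos (by linarith) hσw
    have h2 : c2^2*W^2 = (W*(d m)/(W+ν))^2 := by
      rw [hc2def, hdendef]
      exact alg_h2 W ν σ (d m) (ne_of_gt hWpos) (ne_of_gt (show (0:ℝ) < W + ν by linarith)) hσ2
    have hFm : (d m - w m * c2)^2 = c2^2 * W^2 := by rw [h1, h2]
    have hsplit2 := Fin.sum_univ_succAbove (fun b => (d b - w b * c2)^2) m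
    have KS : ∑ j, (G a j - G a' j)^2 = L^2 := by
      rw [Finset.sum_congr rfl fun j _ => by rw [hrw j]]
      have h3 : ∑ j : Fin k, (d (m.succAbove j) - w (m.succAbove j) * c2)^2
          = (∑ b, (d b - w b * c2)^2) - (d m - w m * c2)^2 := by
        linarith [hsplit2]
      rw [h3, hfull, hFm]; ring
    rw [EuclideanSpace.dist_eq]
    have hterm : ∀ j : Fin k, dist (p' a j) (p' a' j)^2 = t^2 * (G a j - G a' j)^2 := by
      intro j
      rw [Real.dist_eq, sq_abs, hp'app, hp'app]
      ring
    rw [Finset.sum_congr rfl fun j _ => hterm j, ← Finset.mul_sum, KS]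
    rw [show t^2*L^2 = (t*L)^2 by ring]
    exact Real.sqrt_sq (by positivity)
  -- barycenter of the new configuration
  have hsum' : ∑ a, p' a = 0 := by
    have hGsum : ∀ j : Fin k, ∑ a, G a j = 0 := by
      intro j
      have h1 : ∑ a : Fin (k+1), p a.castSucc (m.succAbove j) = -(w (m.succAbove j)) := by
        have h2 := hcol (m.succAbove j)
        rw [Fin.sum_univ_castSucc (f := fun i : Fin (k+2) => p i (m.succAbove j))] at h2
        rw [hwdef]
        linarith
      have h1m : ∑ a : Fin (k+1), p a.castSucc m = -(w m) := by
        have h2 := hcol m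
        rw [Fin.sum_univ_castSucc (f := fun i : Fin (k+2) => p i m)] at h2
        rw [hwdef]
        linarith
      have h3 : ∑ a, G a j
          = (∑ a : Fin (k+1), p a.castSucc (m.succAbove j))
            - (w (m.succAbove j)/den) * ((K+1)*(-η) + σ*W*(∑ a : Fin (k+1), p a.castSucc m)) := by
        rw [Finset.sum_congr rfl fun a _ => hGdef a j]
        rw [Finset.sum_sub_distrib]
        congr 1
        rw [← Finset.mul_sum]
        congr 1
        rw [Finset.sum_add_distrib, Finset.sum_const, ← Finset.mul_sum]
        congr 1
        rw [Finset.card_univ, Fintype.card_fin, nsmul_eq_mul]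
        push_cast
        rw [hKdef]
      rw [h3, h1, h1m, hdendef]
      exact alg_bary W ν σ (w m) η K (w (m.succAbove j)) hWpos (by linarith) hσw hW2
    have hext : (∀ j, (∑ a, p' a) j = (0 : EuclideanSpace ℝ (Fin k)) j) → (∑ a, p' a) = 0 :=
      fun h => WithLp.ofLp_injective 2 (funext h)
    apply hext
    intro j
    rw [WithLp.ofLp_sum, Finset.sum_apply j Finset.univ fun a => (p' a).ofLp]
    have h4 : ∑ a, p' a j = ∑ a, t * G a j := Finset.sum_congr rfl fun a _ => hp'app a j
    rw [h4, ← Finset.mul_sum, hGsum j, mul_zero]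
    simp
  -- box bound of the new configuration
  have hbox' : ∀ (a : Fin (k+1)) (j : Fin k), |p' a j| ≤ 1/2 := by
    intro a j
    have hGb : |G a j| ≤ 1/2 + N/den := by
      rw [hGdef]
      have h1 : |p a.castSucc (m.succAbove j)| ≤ 1/2 := hbox _ _
      have h2 : |w (m.succAbove j)| ≤ ν := hmax _
      have h3 : |(-η + σ*W*(p a.castSucc m))| ≤ η + W/2 := by
        have h4 : |p a.castSucc m| ≤ 1/2 := hbox _ _
        calc |(-η + σ*W*(p a.castSucc m))| ≤ |(-η)| + |σ*W*(p a.castSucc m)| := abs_add_le _ _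
          _ = η + W * |p a.castSucc m| := by
              rw [abs_neg, abs_of_pos hηpos, abs_mul, abs_mul, hσabs, abs_of_pos hWpos]
              ring
          _ ≤ η + W * (1/2) := by nlinarith
          _ = η + W/2 := by ring
      calc |p a.castSucc (m.succAbove j) - (w (m.succAbove j)/den) * (-η + σ*W*(p a.castSucc m))|
          ≤ |p a.castSucc (m.succAbove j)|
            + |(w (m.succAbove j)/den) * (-η + σ*W*(p a.castSucc m))| := abs_sub _ _
        _ = |p a.castSucc (m.succAbove j)|
            + |w (m.succAbove j)|/den * |(-η + σ*W*(p a.castSucc m))| := by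
            rw [abs_mul, abs_div, abs_of_pos hden]
        _ ≤ 1/2 + ν/den * (η + W/2) := by
            have h5 : |w (m.succAbove j)|/den ≤ ν/den := (div_le_div_iff_of_pos_right hden).2 h2
            have h6 : |w (m.succAbove j)|/den * |(-η + σ*W*(p a.castSucc m))|
                ≤ ν/den * (η + W/2) :=
              mul_le_mul h5 h3 (abs_nonneg _) (div_nonneg hν0 hden.le)
            linarith
        _ = 1/2 + N/den := by rw [hNdef]; ring
    rw [hp'app, htdef]
    exact alg_t den N (G a j) hden hN0 hGb
  refine ⟨t * L, ⟨p', hdist', hsum', hbox'⟩, ?_⟩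
  have harith := arith_final k L η W ν hL0 hηpos hη2 hW2 hWpos hW4 hν0 hνhalf
  rw [htdef, hdendef, hNdef]
  exact harith


/-- f₀(n-1) > f₀(n) - 1/√2 for n ≥ 2 (stated with n-1 = k, k ≥ 1). -/
theorem stmt13 (k : ℕ) (hk : 1 ≤ k) : f0 k > f0 (k + 1) - 1 / Real.sqrt 2 := by
  have hub : ∀ ℓ ∈ {ℓ : ℝ | simplexInCube k ℓ}, ℓ ≤ (k : ℝ) := fun ℓ hℓ => simplex_le k hk ℓ hℓ
  have hbdd : BddAbove {ℓ : ℝ | simplexInCube k ℓ} := ⟨(k : ℝ), hub⟩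
  have h0 : 0 ≤ f0 k := le_csSup hbdd (simplex_zero k)
  have hmain : f0 (k + 1) ≤ f0 k + cbound k := by
    refine Real.sSup_le (fun L hL => ?_) (by linarith [cbound_pos k])
    obtain ⟨ℓ, hℓ, hLle⟩ := key k L hL
    have : ℓ ≤ f0 k := le_csSup hbdd hℓ
    linarith
  have hc := cbound_lt k hk
  linarith
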